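/- (Lemma 3.9) Under the standing hypotheses on F, R, e, q, the maps δ⁽ᵏ⁾ and σ, assume additionally σ(e) ∈ Z(R) = F·1, and let τ, ζ : R → R be the unique F-linear maps with σ = τ + ζ, τ(R_ij) ⊆ R_ij for all i,j ∈ {1,2}, ζ(R) ⊆ Z(R), and ζ(R₁₂) = ζ(R₂₁) = 0. Then for all x ∈ R_ii and y ∈ R_jj (i,j ∈ {1,2}): τ(xy) = τ(x)y + xτ(y) + Σ_{k=1}^{q−1} δ⁽ᵏ⁾(x)·δ⁽q−k⁾(y). -/

import Mathlib

private lemma tri_swap' {M : Type*} [AddCommMonoid M] (q : ℕ) (F : ℕ → ℕ → M) :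
    ∑ k ∈ Finset.range q, ∑ a ∈ Finset.range (k+1), F a (k - a)
      = ∑ a ∈ Finset.range q, ∑ b ∈ Finset.range (q - a), F a b := by
  induction q with
  | zero => simp
  | succ q ih =>
    rw [Finset.sum_range_succ, ih]
    have h1 : ∀ a ∈ Finset.range (q+1),
        ∑ b ∈ Finset.range (q+1-a), F a b
          = ∑ b ∈ Finset.range (q-a), F a b + F a (q-a) := by
      intro a ha
      simp only [Finset.mem_range] at ha
      rw [show q + 1 - a = (q - a) + 1 from by omega, Finset.sum_range_succ]
    rw [Finset.sum_congr rfl h1, Finset.sum_add_distrib, Finset.sum_range_succ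
      (fun a => ∑ b ∈ Finset.range (q-a), F a b), Nat.sub_self, Finset.range_zero,
      Finset.sum_empty, add_zero]

private lemma peel0' {M : Type*} [AddCommMonoid M] {q : ℕ} (hq : 0 < q) (f : ℕ → M) :
    ∑ k ∈ Finset.range q, f k = f 0 + ∑ k ∈ Finset.Ico 1 q, f k := by
  have h : Finset.range q = insert 0 (Finset.Ico 1 q) := by
    ext a
    simp only [Finset.mem_range, Finset.mem_insert, Finset.mem_Ico]
    omega
  rw [h, Finset.sum_insert (by simp)]

private lemma peirceD' {A : Type*} [Ring A] (q : ℕ) (D : ℕ → A → A)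
    (hD0 : ∀ x, D 0 x = x)
    (hLeib : ∀ m, 1 ≤ m → m ≤ q - 1 → ∀ x y,
      D m (x * y) = ∑ k ∈ Finset.range (m + 1), D k x * D (m - k) y)
    {a b : A} (ha : ∀ k, 1 ≤ k → k ≤ q - 1 → D k a = 0)
    (hb : ∀ k, 1 ≤ k → k ≤ q - 1 → D k b = 0)
    {m : ℕ} (hm : m ≤ q - 1) (x : A) :
    D m (a * x * b) = a * D m x * b := by
  rcases Nat.eq_zero_or_pos m with h0 | h1
  · subst h0; rw [hD0, hD0]
  · have hab : D m (a * x) = a * D m x := by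
      rw [hLeib m h1 hm a x, Finset.sum_range_succ']
      have hz : ∑ i ∈ Finset.range m, D (i+1) a * D (m - (i+1)) x = 0 :=
        Finset.sum_eq_zero fun i hi => by
          simp only [Finset.mem_range] at hi
          rw [ha (i+1) (by omega) (by omega), zero_mul]
      rw [hz, hD0, Nat.sub_zero, zero_add]
    have hxb : D m (a * x * b) = D m (a * x) * b := by
      rw [hLeib m h1 hm (a * x) b, Finset.sum_range_succ]
      have hz : ∑ k ∈ Finset.range m, D k (a * x) * D (m - k) b = 0 :=
        Finset.sum_eq_zero fun i hi => by
          simp only [Finset.mem_range] at hi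
          rw [hb (m - i) (by omega) (by omega), mul_zero]
      rw [hz, Nat.sub_self, hD0, zero_add]
    rw [hxb, hab]

private lemma coreD {F A : Type*} [CommSemiring F] [Ring A] [Algebra F A]
    (q : ℕ) (hq : 2 ≤ q)
    (D : ℕ → A → A) (τ ζ : A → A)
    (hD0 : ∀ x, D 0 x = x)
    (hLeib : ∀ m, 1 ≤ m → m ≤ q - 1 → ∀ x y,
      D m (x * y) = ∑ k ∈ Finset.range (m + 1), D k x * D (m - k) y)
    (hLie2 : ∀ x y, D q (x * y - y * x) =
      ∑ k ∈ Finset.range (q + 1), (D k x * D (q - k) y - D (q - k) y * D k x))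
    (hLie3 : ∀ x y w, D q (x * (y * w - w * y) - (y * w - w * y) * x) =
      ∑ k ∈ Finset.range (q + 1), ∑ l ∈ Finset.range (q + 1 - k),
        (D k x * (D l y * D (q - k - l) w - D (q - k - l) w * D l y) -
          (D l y * D (q - k - l) w - D (q - k - l) w * D l y) * D k x))
    (hsum : ∀ x, D q x = τ x + ζ x)
    (hζZ : ∀ x, ∃ c : F, ζ x = c • (1 : A))
    (f g : A) (hff : f * f = f) (hgg : g * g = g) (hgf : g * f = 0)
    (hDf : ∀ k, 1 ≤ k → k ≤ q - 1 → D k f = 0)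
    (hDg : ∀ k, 1 ≤ k → k ≤ q - 1 → D k g = 0)
    (hτff : ∀ x, x = f * x * f → τ x = f * τ x * f)
    (hτfg : ∀ s, s = f * s * g → τ s = f * τ s * g)
    (hζs : ∀ s, s = f * s * g → ζ s = 0)
    (hprime : ∀ M : A, (∀ r, M * r * g = 0) → M = 0) :
    ∀ x, x = f * x * f → ∀ y, y = f * y * f →
      τ (x * y) = τ x * y + x * τ y + ∑ k ∈ Finset.Icc 1 (q - 1), D k x * D (q - k) y := by
  intro x hx y hy
  have hq0 : 0 < q := by omega
  have hIcc : Finset.Icc 1 (q-1) = Finset.Ico 1 q := by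
    ext a
    simp only [Finset.mem_Icc, Finset.mem_Ico]
    omega
  have hgf1 : ∀ z : A, g * (f * z) = 0 := fun z => by rw [← mul_assoc, hgf, zero_mul]
  have hff1 : ∀ z : A, f * (f * z) = f * z := fun z => by rw [← mul_assoc, hff]
  have z1 : ∀ u v : A, u = f * u * g → v = f * v * f → u * v = 0 := by
    intro u v hu hv; rw [hu, hv]; simp only [mul_assoc, hgf1, mul_zero]
  have pff : ∀ u v : A, u = f * u * f → v = f * v * f → u * v = f * (u * v) * f := by
    intro u v hu hv; rw [hu, hv]; simp only [mul_assoc, hff, hff1]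
  have pfg : ∀ u v : A, u = f * u * f → v = f * v * g → u * v = f * (u * v) * g := by
    intro u v hu hv; rw [hu, hv]; simp only [mul_assoc, hff, hff1, hgg]
  have wf : ∀ w : A, w = f * w * f → w * f = w := by
    intro w hw
    nth_rewrite 1 [hw]
    rw [mul_assoc (f * w), hff, ← hw]
  have hxy : x * y = f * (x * y) * f := pff x y hx hy
  have Pτxy := hτff _ hxy
  have Pτx := hτff x hx
  have Pτy := hτff y hy
  have Px : ∀ m, m ≤ q - 1 → D m x = f * D m x * f := by
    intro m hm
    conv_lhs => rw [hx]
    exact peirceD' q D hD0 hLeib hDf hDf hm x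
  have Py : ∀ m, m ≤ q - 1 → D m y = f * D m y * f := by
    intro m hm
    conv_lhs => rw [hy]
    exact peirceD' q D hD0 hLeib hDf hDf hm y
  have Pxy : ∀ m, m ≤ q - 1 → D m (x * y) = f * D m (x * y) * f := by
    intro m hm
    conv_lhs => rw [hxy]
    exact peirceD' q D hD0 hLeib hDf hDf hm (x * y)
  -- key identity
  have key : ∀ s : A, s = f * s * g →
      τ (x * y) * s = τ x * (y * s) + x * (τ y * s)
        + ∑ k ∈ Finset.Icc 1 (q-1), D k x * (D (q-k) y * s) := by
    intro s hs
    rw [hIcc]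
    have Ps : ∀ m, m ≤ q → D m s = f * D m s * g := by
      intro m hm
      rcases eq_or_lt_of_le hm with hmq | hmq
      · subst hmq
        have h' : D m s = τ s := by rw [hsum s, hζs s hs, add_zero]
        rw [h']
        exact hτfg s hs
      · conv_lhs => rw [hs]
        exact peirceD' q D hD0 hLeib hDf hDg (by omega) s
    have hys : y * s = f * (y * s) * g := pfg y s hy hs
    -- E1
    have e1 : D q (x * y * s) =
        ∑ k ∈ Finset.range (q + 1),
          (D k (x*y) * D (q-k) s - D (q-k) s * D k (x*y)) := by
      have h0 : (x*y) * s - s * (x*y) = x * y * s := by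
        rw [z1 s (x*y) hs hxy, sub_zero]
      rw [← h0]
      exact hLie2 (x*y) s
    -- E2
    have e2 : D q (x * y * s) =
        ∑ k ∈ Finset.range (q + 1), ∑ l ∈ Finset.range (q + 1 - k),
          (D k x * (D l y * D (q-k-l) s - D (q-k-l) s * D l y) -
            (D l y * D (q-k-l) s - D (q-k-l) s * D l y) * D k x) := by
      have h1 : y * s - s * y = y * s := by rw [z1 s y hs hy, sub_zero]
      have h2 : x * (y * s) - (y * s) * x = x * y * s := by
        rw [z1 (y*s) x hys hx, sub_zero, ← mul_assoc]
      have h3 := hLie3 x y s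
      rw [h1, h2] at h3
      exact h3
    obtain ⟨cxy, hcxy⟩ := hζZ (x*y)
    obtain ⟨cy, hcy⟩ := hζZ y
    obtain ⟨cx, hcx⟩ := hζZ x
    -- reduce E1's RHS
    have r1 : (∑ k ∈ Finset.range (q + 1),
          (D k (x*y) * D (q-k) s - D (q-k) s * D k (x*y)))
        = τ (x*y) * s
          + ∑ k ∈ Finset.range q, ∑ a ∈ Finset.range (k+1),
              D a x * (D (k-a) y * D (q - a - (k-a)) s) := by
      rw [Finset.sum_range_succ]
      have hlast : D q (x*y) * D (q-q) s - D (q-q) s * D q (x*y) = τ (x*y) * s := by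
        rw [Nat.sub_self, hD0, hsum (x*y), hcxy]
        simp only [add_mul, mul_add, smul_mul_assoc, mul_smul_comm, one_mul, mul_one]
        rw [z1 s (τ (x*y)) hs Pτxy]
        abel
      rw [hlast]
      have hpre : ∀ k ∈ Finset.range q,
          D k (x*y) * D (q-k) s - D (q-k) s * D k (x*y)
            = ∑ a ∈ Finset.range (k+1), D a x * (D (k-a) y * D (q-a-(k-a)) s) := by
        intro k hk
        simp only [Finset.mem_range] at hk
        rw [z1 (D (q-k) s) (D k (x*y)) (Ps (q-k) (by omega)) (Pxy k (by omega)), sub_zero]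
        have hexp : D k (x*y) = ∑ a ∈ Finset.range (k+1), D a x * D (k-a) y := by
          rcases Nat.eq_zero_or_pos k with h0 | h1
          · subst h0
            simp [hD0]
          · exact hLeib k h1 (by omega) x y
        rw [hexp, Finset.sum_mul]
        refine Finset.sum_congr rfl fun a ha => ?_
        simp only [Finset.mem_range] at ha
        rw [show q - a - (k - a) = q - k from by omega, mul_assoc]
      rw [Finset.sum_congr rfl hpre]
      exact add_comm _ _
    -- reduce E2's RHS
    have r2 : (∑ k ∈ Finset.range (q + 1), ∑ l ∈ Finset.range (q + 1 - k),
          (D k x * (D l y * D (q-k-l) s - D (q-k-l) s * D l y) -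
            (D l y * D (q-k-l) s - D (q-k-l) s * D l y) * D k x))
        = ((∑ l ∈ Finset.range q, x * (D l y * D (q-l) s)) + x * (τ y * s)
            + ((∑ k ∈ Finset.Ico 1 q, ∑ l ∈ Finset.range (q-k),
                  D k x * (D l y * D (q-k-l) s))
              + ∑ k ∈ Finset.Ico 1 q, D k x * (D (q-k) y * s)))
          + τ x * (y * s) := by
      rw [Finset.sum_range_succ]
      have hkq : (∑ l ∈ Finset.range (q + 1 - q),
          (D q x * (D l y * D (q-q-l) s - D (q-q-l) s * D l y) -
            (D l y * D (q-q-l) s - D (q-q-l) s * D l y) * D q x)) = τ x * (y * s) := by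
        rw [show q + 1 - q = 1 from by omega, Finset.sum_range_one,
          show q - q - 0 = 0 from by omega, hD0, hD0]
        have hC : y * s - s * y = y * s := by rw [z1 s y hs hy, sub_zero]
        rw [hC, hsum x, hcx]
        simp only [add_mul, mul_add, smul_mul_assoc, mul_smul_comm, one_mul, mul_one]
        rw [z1 (y*s) (τ x) hys Pτx]
        abel
      rw [hkq, peel0' hq0]
      simp only [Nat.sub_zero, hD0]
      have h0eq : (∑ l ∈ Finset.range (q+1),
          (x * (D l y * D (q-l) s - D (q-l) s * D l y) -
            (D l y * D (q-l) s - D (q-l) s * D l y) * x))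
          = (∑ l ∈ Finset.range q, x * (D l y * D (q-l) s)) + x * (τ y * s) := by
        rw [Finset.sum_range_succ]
        congr 1
        · refine Finset.sum_congr rfl fun l hl => ?_
          simp only [Finset.mem_range] at hl
          rw [z1 (D (q-l) s) (D l y) (Ps _ (by omega)) (Py l (by omega)), sub_zero,
            z1 (D l y * D (q-l) s) x (pfg _ _ (Py l (by omega)) (Ps _ (by omega))) hx,
            sub_zero]
        · rw [Nat.sub_self, hD0]
          have hC : D q y * s - s * D q y = τ y * s := by
            rw [hsum y, hcy]
            simp only [add_mul, mul_add, smul_mul_assoc, mul_smul_comm, one_mul, mul_one]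
            rw [z1 s (τ y) hs Pτy]
            abel
          rw [hC, z1 (τ y * s) x (pfg _ _ Pτy hs) hx, sub_zero]
      rw [h0eq]
      have hmid : ∀ k ∈ Finset.Ico 1 q,
          (∑ l ∈ Finset.range (q + 1 - k),
            (D k x * (D l y * D (q-k-l) s - D (q-k-l) s * D l y) -
              (D l y * D (q-k-l) s - D (q-k-l) s * D l y) * D k x))
          = (∑ l ∈ Finset.range (q-k), D k x * (D l y * D (q-k-l) s))
            + D k x * (D (q-k) y * s) := by
        intro k hk
        simp only [Finset.mem_Ico] at hk
        rw [show q + 1 - k = (q - k) + 1 from by omega, Finset.sum_range_succ]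
        congr 1
        · refine Finset.sum_congr rfl fun l hl => ?_
          simp only [Finset.mem_range] at hl
          rw [z1 (D (q-k-l) s) (D l y) (Ps _ (by omega)) (Py l (by omega)), sub_zero,
            z1 (D l y * D (q-k-l) s) (D k x)
              (pfg _ _ (Py l (by omega)) (Ps _ (by omega))) (Px k (by omega)),
            sub_zero]
        · rw [show q - k - (q - k) = 0 from by omega, hD0,
            z1 s (D (q-k) y) hs (Py _ (by omega)), sub_zero,
            z1 (D (q-k) y * s) (D k x) (pfg _ _ (Py _ (by omega)) hs) (Px k (by omega)),
            sub_zero]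
      rw [Finset.sum_congr rfl hmid, Finset.sum_add_distrib]
    -- combine
    have emain := e1.symm.trans e2
    rw [r1, r2] at emain
    have htri : (∑ k ∈ Finset.range q, ∑ a ∈ Finset.range (k+1),
          D a x * (D (k-a) y * D (q - a - (k-a)) s))
        = ∑ a ∈ Finset.range q, ∑ b ∈ Finset.range (q - a),
            D a x * (D b y * D (q - a - b) s) :=
      tri_swap' q (fun a b => D a x * (D b y * D (q - a - b) s))
    rw [htri, peel0' hq0] at emain
    simp only [Nat.sub_zero, hD0] at emain
    have h6 := eq_sub_of_add_eq emain
    rw [h6]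
    abel
  -- conclude via primeness
  have hMf : (τ (x*y) - (τ x * y + x * τ y
        + ∑ k ∈ Finset.Icc 1 (q-1), D k x * D (q-k) y)) * f
      = τ (x*y) - (τ x * y + x * τ y + ∑ k ∈ Finset.Icc 1 (q-1), D k x * D (q-k) y) := by
    rw [sub_mul, add_mul, add_mul, Finset.sum_mul]
    have h1 : τ (x*y) * f = τ (x*y) := wf _ Pτxy
    have h2 : (τ x * y) * f = τ x * y := wf _ (pff _ _ Pτx hy)
    have h3 : (x * τ y) * f = x * τ y := wf _ (pff _ _ hx Pτy)
    have h4 : (∑ k ∈ Finset.Icc 1 (q-1), D k x * D (q-k) y * f)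
        = ∑ k ∈ Finset.Icc 1 (q-1), D k x * D (q-k) y := by
      refine Finset.sum_congr rfl fun k hk => ?_
      simp only [Finset.mem_Icc] at hk
      exact wf _ (pff _ _ (Px k (by omega)) (Py (q-k) (by omega)))
    rw [h1, h2, h3, h4]
  have hzero : ∀ r : A, (τ (x*y) - (τ x * y + x * τ y
        + ∑ k ∈ Finset.Icc 1 (q-1), D k x * D (q-k) y)) * r * g = 0 := by
    intro r
    have hs' : f * (r * g) = f * (f * (r * g)) * g := by
      simp only [mul_assoc, hff1, hgg]
    have hk := key (f * (r * g)) hs'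
    have expand : (τ (x*y) - (τ x * y + x * τ y
          + ∑ k ∈ Finset.Icc 1 (q-1), D k x * D (q-k) y)) * (f * (r * g))
        = τ (x*y) * (f * (r * g)) - (τ x * (y * (f * (r * g)))
            + x * (τ y * (f * (r * g)))
            + ∑ k ∈ Finset.Icc 1 (q-1), D k x * (D (q-k) y * (f * (r * g)))) := by
      rw [sub_mul, add_mul, add_mul, Finset.sum_mul]
      simp only [mul_assoc]
    calc (τ (x*y) - (τ x * y + x * τ y
          + ∑ k ∈ Finset.Icc 1 (q-1), D k x * D (q-k) y)) * r * g
        = ((τ (x*y) - (τ x * y + x * τ y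
          + ∑ k ∈ Finset.Icc 1 (q-1), D k x * D (q-k) y)) * f) * r * g := by rw [hMf]
      _ = (τ (x*y) - (τ x * y + x * τ y
          + ∑ k ∈ Finset.Icc 1 (q-1), D k x * D (q-k) y)) * (f * (r * g)) := by
          simp only [mul_assoc]
      _ = 0 := by rw [expand, hk, sub_self]
  have hM0 := hprime _ hzero
  exact sub_eq_zero.mp hM0

private lemma mixedD {A : Type*} [Ring A] (q : ℕ) (D : ℕ → A → A) (τ : A → A)
    (hD0 : ∀ z, D 0 z = z)
    (hLeib : ∀ m, 1 ≤ m → m ≤ q - 1 → ∀ x y,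
      D m (x * y) = ∑ k ∈ Finset.range (m + 1), D k x * D (m - k) y)
    (f g : A) (hfg : f * g = 0)
    (hDf : ∀ k, 1 ≤ k → k ≤ q - 1 → D k f = 0)
    (hDg : ∀ k, 1 ≤ k → k ≤ q - 1 → D k g = 0)
    {x y : A}
    (hτx : τ x = f * τ x * f) (hτy : τ y = g * τ y * g)
    (hτ0 : τ 0 = 0)
    (hx : x = f * x * f) (hy : y = g * y * g) :
    τ (x * y) = τ x * y + x * τ y + ∑ k ∈ Finset.Icc 1 (q-1), D k x * D (q-k) y := by
  have hfg1 : ∀ z : A, f * (g * z) = 0 := fun z => by rw [← mul_assoc, hfg, zero_mul]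
  have hxy0 : x * y = 0 := by
    rw [hx, hy]; simp only [mul_assoc, hfg1, mul_zero]
  have h1 : τ x * y = 0 := by
    rw [hτx, hy]; simp only [mul_assoc, hfg1, mul_zero]
  have h2 : x * τ y = 0 := by
    rw [hx, hτy]; simp only [mul_assoc, hfg1, mul_zero]
  have h3 : (∑ k ∈ Finset.Icc 1 (q-1), D k x * D (q-k) y) = 0 := by
    refine Finset.sum_eq_zero fun k hk => ?_
    simp only [Finset.mem_Icc] at hk
    have PX : D k x = f * D k x * f := by
      conv_lhs => rw [hx]
      exact peirceD' q D hD0 hLeib hDf hDf (by omega) x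
    have PY : D (q-k) y = g * D (q-k) y * g := by
      conv_lhs => rw [hy]
      exact peirceD' q D hD0 hLeib hDg hDg (by omega) y
    rw [PX, PY]; simp only [mul_assoc, hfg1, mul_zero]
  rw [hxy0, hτ0, h1, h2, h3, add_zero, add_zero]

private lemma D_one' {A : Type*} [Ring A] (q : ℕ) (D : ℕ → A → A)
    (hD0 : ∀ x, D 0 x = x)
    (hLeib : ∀ m, 1 ≤ m → m ≤ q - 1 → ∀ x y,
      D m (x * y) = ∑ k ∈ Finset.range (m + 1), D k x * D (m - k) y) :
    ∀ m, 1 ≤ m → m ≤ q - 1 → D m (1 : A) = 0 := by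
  intro m
  induction m using Nat.strong_induction_on with
  | _ m ih =>
    intro h1 h2
    obtain ⟨m', rfl⟩ : ∃ m', m = m' + 1 := ⟨m - 1, by omega⟩
    have this1 := hLeib (m' + 1) h1 h2 1 1
    rw [mul_one] at this1
    rw [Finset.sum_range_succ, Finset.sum_range_succ'] at this1
    have hz : ∑ i ∈ Finset.range m', D (i+1) 1 * D (m' + 1 - (i+1)) 1 = 0 :=
      Finset.sum_eq_zero fun i hi => by
        simp only [Finset.mem_range] at hi
        rw [ih (i+1) (by omega) (by omega) (by omega), zero_mul]
    rw [hz, hD0, Nat.sub_zero, Nat.sub_self, hD0, mul_one, one_mul, zero_add] at this1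
    exact (right_eq_add.mp this1)

private lemma mat_prime' {F : Type*} [Field F] {n : ℕ} (g M : Matrix (Fin n) (Fin n) F)
    (hg : g ≠ 0) (h : ∀ r, M * r * g = 0) : M = 0 := by
  by_contra hM
  obtain ⟨i, j, hij⟩ : ∃ i j, M i j ≠ 0 := by
    by_contra hc; push_neg at hc; exact hM (by ext i j; simp [hc])
  obtain ⟨k, l, hkl⟩ : ∃ k l, g k l ≠ 0 := by
    by_contra hc; push_neg at hc; exact hg (by ext i j; simp [hc])
  have h2 : (M * Matrix.single j k (1:F) * g) i l = M i j * g k l := by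
    rw [Matrix.mul_apply]
    rw [Finset.sum_eq_single k]
    · rw [Matrix.mul_single_apply_same, mul_one]
    · intro b _ hb
      rw [Matrix.mul_single_apply_of_ne (hbj := hb), zero_mul]
    · intro hk'; exact absurd (Finset.mem_univ k) hk'
  rw [h (Matrix.single j k (1:F)), Matrix.zero_apply] at h2
  rcases mul_eq_zero.mp h2.symm with h' | h'
  · exact hij h'
  · exact hkl h'

/-- Lemma 3.9: with `σ = τ + ζ` as in the text, for all `x ∈ R_ii` and `y ∈ R_jj`,
`τ(xy) = τ(x)y + xτ(y) + Σ_{k=1}^{q-1} δ⁽ᵏ⁾(x) δ⁽q-k⁾(y)`. -/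
theorem stmt_7 {F : Type*} [Field F] {p : ℕ} [CharP F p] (hp2 : p ≠ 2)
    {n : ℕ} (hn : 2 ≤ n)
    (e : Matrix (Fin n) (Fin n) F) (he : e * e = e) (he0 : e ≠ 0) (he1 : e ≠ 1)
    (q : ℕ) (hq : 2 ≤ q)
    (D : ℕ → Matrix (Fin n) (Fin n) F →ₗ[F] Matrix (Fin n) (Fin n) F)
    (hD0 : D 0 = LinearMap.id)
    (hDe : ∀ k, 1 ≤ k → k ≤ q - 1 → D k e = 0)
    (hLeib : ∀ m, 1 ≤ m → m ≤ q - 1 → ∀ x y,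
      D m (x * y) = ∑ k ∈ Finset.range (m + 1), D k x * D (m - k) y)
    (hLie2 : ∀ x y, D q (x * y - y * x) =
      ∑ k ∈ Finset.range (q + 1), (D k x * D (q - k) y - D (q - k) y * D k x))
    (hLie3 : ∀ x y w, D q (x * (y * w - w * y) - (y * w - w * y) * x) =
      ∑ k ∈ Finset.range (q + 1), ∑ l ∈ Finset.range (q + 1 - k),
        (D k x * (D l y * D (q - k - l) w - D (q - k - l) w * D l y) -
          (D l y * D (q - k - l) w - D (q - k - l) w * D l y) * D k x))
    (hσe : ∃ c : F, D q e = c • (1 : Matrix (Fin n) (Fin n) F))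
    (τ ζ : Matrix (Fin n) (Fin n) F →ₗ[F] Matrix (Fin n) (Fin n) F)
    (hsum : ∀ x, D q x = τ x + ζ x)
    (hτ : ∀ f ∈ ({e, 1 - e} : Set (Matrix (Fin n) (Fin n) F)),
      ∀ f' ∈ ({e, 1 - e} : Set (Matrix (Fin n) (Fin n) F)),
      ∀ x, x = f * x * f' → τ x = f * τ x * f')
    (hζZ : ∀ x, ∃ c : F, ζ x = c • (1 : Matrix (Fin n) (Fin n) F))
    (hζ12 : ∀ x, x = e * x * (1 - e) → ζ x = 0)
    (hζ21 : ∀ x, x = (1 - e) * x * e → ζ x = 0)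
    :
    ∀ x, (x = e * x * e ∨ x = (1 - e) * x * (1 - e)) →
    ∀ y, (y = e * y * e ∨ y = (1 - e) * y * (1 - e)) →
      τ (x * y) = τ x * y + x * τ y +
        ∑ k ∈ Finset.Icc 1 (q - 1), D k x * D (q - k) y := by
  intro x hx y hy
  have hD0' : ∀ z : Matrix (Fin n) (Fin n) F, D 0 z = z := fun z => by
    rw [hD0]; rfl
  have hA : e * (1 - e) = 0 := by rw [mul_sub, mul_one, he, sub_self]
  have hB : (1 - e) * e = 0 := by rw [sub_mul, one_mul, he, sub_self]
  have he2 : (1 - e) * (1 - e) = 1 - e := by rw [mul_sub, mul_one, hB, sub_zero]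
  have hD1 : ∀ m, 1 ≤ m → m ≤ q - 1 → D m (1 : Matrix (Fin n) (Fin n) F) = 0 :=
    D_one' q (fun k z => D k z) hD0' hLeib
  have hDe2 : ∀ k, 1 ≤ k → k ≤ q - 1 → D k (1 - e) = 0 := fun k h1 h2 => by
    rw [map_sub, hD1 k h1 h2, hDe k h1 h2, sub_zero]
  have hme : e ∈ ({e, 1 - e} : Set (Matrix (Fin n) (Fin n) F)) := Set.mem_insert _ _
  have hm1e : (1 - e) ∈ ({e, 1 - e} : Set (Matrix (Fin n) (Fin n) F)) :=
    Set.mem_insert_of_mem _ rfl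
  have hprime1 : ∀ M : Matrix (Fin n) (Fin n) F, (∀ r, M * r * (1 - e) = 0) → M = 0 := by
    intro M h
    refine mat_prime' (1 - e) M (fun hc => he1 ?_) h
    exact (sub_eq_zero.mp hc).symm
  have hprime2 : ∀ M : Matrix (Fin n) (Fin n) F, (∀ r, M * r * e = 0) → M = 0 :=
    fun M h => mat_prime' e M he0 h
  rcases hx with hx | hx <;> rcases hy with hy | hy
  · exact coreD q hq (fun k z => D k z) τ ζ hD0' hLeib hLie2 hLie3 hsum hζZ
      e (1-e) he he2 hB hDe hDe2 (hτ e hme e hme) (hτ e hme (1-e) hm1e) hζ12 hprime1 x hx y hy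
  · exact mixedD q (fun k z => D k z) τ hD0' hLeib e (1-e) hA hDe hDe2
      (hτ e hme e hme x hx) (hτ (1-e) hm1e (1-e) hm1e y hy) (map_zero τ) hx hy
  · exact mixedD q (fun k z => D k z) τ hD0' hLeib (1-e) e hB hDe2 hDe
      (hτ (1-e) hm1e (1-e) hm1e x hx) (hτ e hme e hme y hy) (map_zero τ) hx hy
  · exact coreD q hq (fun k z => D k z) τ ζ hD0' hLeib hLie2 hLie3 hsum hζZ
      (1-e) e he2 he hA hDe2 hDe (hτ (1-e) hm1e (1-e) hm1e) (hτ (1-e) hm1e e hme)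
      hζ21 hprime2 x hx y hy
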